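/- arXiv:1412.6487 — 3 statements merged into one kernel-verified Lean document; each statement's English description precedes it below -/
import Mathlib

section
/- Let g : ℝ^d → ℝ^d with g(x*) = 0, and suppose on B(x*, ε₁): (1) g' is Lipschitz with constant ω_L; (2) for a fixed α with 0 < α < α_M and a positive semidefinite matrix R, the matrix αR + g'(x) is invertible with ‖(αR + g'(x))⁻¹‖ ≤ M_I; (3) ‖(αR + g'(x))⁻¹(αR)‖ ≤ (α/β)/(1 + α/β) for some β > 0. Then for the iterate x⁺ = x − (αR + g'(x))⁻¹ g(x), the error e⁺ = x⁺ − x* satisfies ‖e⁺‖ ≤ ‖e‖ ( M_I (ω_L/2) ‖e‖ + 1/(1 + β/α) ), where e = x − x*. -/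
open Metric intervalIntegral

theorem taylor_aux {E : Type*} [NormedAddCommGroup E] [NormedSpace ℝ E] [CompleteSpace E]
    (g : E → E) (g' : E → (E →L[ℝ] E)) (xstar : E) (ε₁ ωL : ℝ) (hωL : 0 < ωL)
    (hdiff : ∀ y ∈ ball xstar ε₁, HasFDerivAt g (g' y) y)
    (hLip : ∀ y ∈ ball xstar ε₁, ∀ z ∈ ball xstar ε₁, ‖g' y - g' z‖ ≤ ωL * ‖y - z‖)
    (x : E) (hx : x ∈ ball xstar ε₁) :
    ‖g x - g xstar - g' x (x - xstar)‖ ≤ ωL / 2 * ‖x - xstar‖ ^ 2 := by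
  set e := x - xstar with he
  have hε : dist x xstar < ε₁ := mem_ball.mp hx
  have hnorm : ‖e‖ < ε₁ := by rw [he, ← dist_eq_norm]; exact hε
  have hmem : ∀ t ∈ Set.Icc (0:ℝ) 1, xstar + t • e ∈ ball xstar ε₁ := by
    intro t ht
    rw [mem_ball, dist_eq_norm, add_sub_cancel_left, norm_smul, Real.norm_eq_abs,
      abs_of_nonneg ht.1]
    calc t * ‖e‖ ≤ 1 * ‖e‖ := by
          apply mul_le_mul_of_nonneg_right ht.2 (norm_nonneg _)
      _ = ‖e‖ := one_mul _
      _ < ε₁ := hnorm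
  have hline : ∀ t : ℝ, HasDerivAt (fun s : ℝ => xstar + s • e) e t := by
    intro t
    simpa using ((hasDerivAt_id t).smul_const e).const_add xstar
  have hφ : ∀ t ∈ Set.Icc (0:ℝ) 1,
      HasDerivAt (fun s => g (xstar + s • e)) (g' (xstar + t • e) e) t :=
    fun t ht => (hdiff _ (hmem t ht)).comp_hasDerivAt t (hline t)
  have hcont : ContinuousOn (fun t : ℝ => (g' (xstar + t • e)) e) (Set.Icc 0 1) := by
    apply LipschitzOnWith.continuousOn (K := ⟨ωL * ‖e‖ * ‖e‖, by positivity⟩)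
    apply LipschitzOnWith.of_dist_le_mul
    intro s hs t ht
    rw [dist_eq_norm, dist_eq_norm]
    calc ‖(g' (xstar + s • e)) e - (g' (xstar + t • e)) e‖
        = ‖(g' (xstar + s • e) - g' (xstar + t • e)) e‖ := by
          rw [ContinuousLinearMap.sub_apply]
      _ ≤ ‖g' (xstar + s • e) - g' (xstar + t • e)‖ * ‖e‖ :=
          ContinuousLinearMap.le_opNorm _ _
      _ ≤ ωL * ‖(xstar + s • e) - (xstar + t • e)‖ * ‖e‖ := by
          apply mul_le_mul_of_nonneg_right _ (norm_nonneg _)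
          exact hLip _ (hmem s hs) _ (hmem t ht)
      _ = ωL * ‖e‖ * ‖e‖ * ‖s - t‖ := by
          rw [show xstar + s • e - (xstar + t • e) = (s - t) • e by module,
            norm_smul]; ring
      _ = ↑(⟨ωL * ‖e‖ * ‖e‖, by positivity⟩ : NNReal) * ‖s - t‖ := rfl
  have hcont' : ContinuousOn (fun t : ℝ => (g' (xstar + t • e)) e) (Set.uIcc 0 1) := by
    rwa [Set.uIcc_of_le zero_le_one]
  have hFTC : g (xstar + (1:ℝ) • e) - g (xstar + (0:ℝ) • e)
      = ∫ t in (0:ℝ)..1, (g' (xstar + t • e)) e := by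
    refine (intervalIntegral.integral_eq_sub_of_hasDerivAt
      (fun t ht => hφ t (by rwa [Set.uIcc_of_le zero_le_one] at ht))
      (hcont'.intervalIntegrable)).symm
  have hx1 : xstar + (1:ℝ) • e = x := by rw [he]; module
  have hx0 : xstar + (0:ℝ) • e = xstar := by module
  rw [hx1, hx0] at hFTC
  have hgc : (g' x) e = ∫ t in (0:ℝ)..1, (g' x) e := by
    rw [intervalIntegral.integral_const]; simp
  have hkey : g x - g xstar - g' x e
      = ∫ t in (0:ℝ)..1, ((g' (xstar + t • e)) e - (g' x) e) := by
    rw [intervalIntegral.integral_sub hcont'.intervalIntegrable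
      (intervalIntegrable_const), hFTC, ← hgc]
  rw [hkey]
  have hb : IntervalIntegrable (fun t : ℝ => ωL * ‖e‖ ^ 2 * (1 - t)) MeasureTheory.volume 0 1 := by
    apply Continuous.intervalIntegrable; continuity
  have hval : (∫ t in (0:ℝ)..1, ωL * ‖e‖ ^ 2 * (1 - t)) = ωL / 2 * ‖e‖ ^ 2 := by
    have h12 : (∫ t in (0:ℝ)..1, (1 - t)) = 1 / 2 := by
      rw [intervalIntegral.integral_sub intervalIntegrable_const intervalIntegrable_id]
      simp
      norm_num
    rw [intervalIntegral.integral_const_mul, h12]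
    ring
  calc ‖∫ t in (0:ℝ)..1, ((g' (xstar + t • e)) e - (g' x) e)‖
      ≤ |∫ t in (0:ℝ)..1, ωL * ‖e‖ ^ 2 * (1 - t)| := by
        apply intervalIntegral.norm_integral_le_abs_of_norm_le _ hb
        apply (MeasureTheory.ae_restrict_mem measurableSet_uIoc).mono
        intro t ht
        rw [Set.uIoc_of_le zero_le_one] at ht
        have htI : t ∈ Set.Icc (0:ℝ) 1 := ⟨le_of_lt ht.1, ht.2⟩
        calc ‖(g' (xstar + t • e)) e - (g' x) e‖
            = ‖(g' (xstar + t • e) - g' x) e‖ := by rw [ContinuousLinearMap.sub_apply]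
          _ ≤ ‖g' (xstar + t • e) - g' x‖ * ‖e‖ := ContinuousLinearMap.le_opNorm _ _
          _ ≤ ωL * ‖(xstar + t • e) - x‖ * ‖e‖ := by
              apply mul_le_mul_of_nonneg_right _ (norm_nonneg _)
              exact hLip _ (hmem t htI) _ hx
          _ = ωL * ‖e‖ ^ 2 * (1 - t) := by
              rw [show xstar + t • e - x = (t - 1) • e by rw [he]; module, norm_smul,
                Real.norm_eq_abs, abs_of_nonpos (by linarith [ht.2] : t - 1 ≤ 0)]
              ring
    _ = ωL / 2 * ‖e‖ ^ 2 := by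
        rw [hval, abs_of_nonneg (by positivity)]

/-- Error bound for one regularized Newton step:
‖e⁺‖ ≤ ‖e‖ ( M_I (ω_L/2) ‖e‖ + 1/(1 + β/α) ). -/
theorem stmt_4 {d : ℕ}
    (g : EuclideanSpace ℝ (Fin d) → EuclideanSpace ℝ (Fin d))
    (g' : EuclideanSpace ℝ (Fin d) →
      (EuclideanSpace ℝ (Fin d) →L[ℝ] EuclideanSpace ℝ (Fin d)))
    (R : EuclideanSpace ℝ (Fin d) →L[ℝ] EuclideanSpace ℝ (Fin d))
    (B : EuclideanSpace ℝ (Fin d) →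
      (EuclideanSpace ℝ (Fin d) →L[ℝ] EuclideanSpace ℝ (Fin d)))
    (xstar : EuclideanSpace ℝ (Fin d)) (ε₁ ωL α αM β MI : ℝ)
    (hε₁ : 0 < ε₁) (hωL : 0 < ωL) (hα : 0 < α) (hαM : α < αM) (hβ : 0 < β) (hMI : 0 < MI)
    (hdiff : ∀ y ∈ ball xstar ε₁, HasFDerivAt g (g' y) y)
    (hzero : g xstar = 0)
    (hRpsd : ∀ v : EuclideanSpace ℝ (Fin d), (0 : ℝ) ≤ inner ℝ v (R v))
    (hLip : ∀ y ∈ ball xstar ε₁, ∀ z ∈ ball xstar ε₁, ‖g' y - g' z‖ ≤ ωL * ‖y - z‖)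
    -- B y is the two-sided inverse of αR + g'(y):
    (hBl : ∀ y ∈ ball xstar ε₁, (B y).comp (α • R + g' y) = ContinuousLinearMap.id ℝ _)
    (hBr : ∀ y ∈ ball xstar ε₁, (α • R + g' y).comp (B y) = ContinuousLinearMap.id ℝ _)
    (hBbound : ∀ y ∈ ball xstar ε₁, ‖B y‖ ≤ MI)
    (hstab : ∀ y ∈ ball xstar ε₁, ‖(B y).comp (α • R)‖ ≤ (α / β) / (1 + α / β))
    (x : EuclideanSpace ℝ (Fin d)) (hx : x ∈ ball xstar ε₁) :
    ‖(x - B x (g x)) - xstar‖ ≤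
      ‖x - xstar‖ * (MI * (ωL / 2) * ‖x - xstar‖ + 1 / (1 + β / α)) := by
  have hT : ‖g x - g' x (x - xstar)‖ ≤ ωL / 2 * ‖x - xstar‖ ^ 2 := by
    have h := taylor_aux g g' xstar ε₁ ωL hωL hdiff hLip x hx
    rwa [hzero, sub_zero] at h
  have hid : B x ((α • R + g' x) (x - xstar)) = x - xstar := by
    have h := congrArg (fun L : EuclideanSpace ℝ (Fin d) →L[ℝ] EuclideanSpace ℝ (Fin d) =>
      L (x - xstar)) (hBl x hx)
    simpa using h
  have hrw : (x - B x (g x)) - xstar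
      = B x ((α • R) (x - xstar)) + B x (g' x (x - xstar) - g x) := by
    calc (x - B x (g x)) - xstar = (x - xstar) - B x (g x) := by abel
      _ = B x ((α • R + g' x) (x - xstar)) - B x (g x) := by rw [hid]
      _ = B x ((α • R + g' x) (x - xstar) - g x) := (map_sub _ _ _).symm
      _ = B x ((α • R) (x - xstar) + (g' x (x - xstar) - g x)) := by
            congr 1
            rw [ContinuousLinearMap.add_apply]
            abel
      _ = B x ((α • R) (x - xstar)) + B x (g' x (x - xstar) - g x) := map_add _ _ _
  have h1 : ‖B x ((α • R) (x - xstar))‖ ≤ (α / β) / (1 + α / β) * ‖x - xstar‖ := by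
    calc ‖B x ((α • R) (x - xstar))‖ = ‖((B x).comp (α • R)) (x - xstar)‖ := rfl
      _ ≤ ‖(B x).comp (α • R)‖ * ‖x - xstar‖ := ContinuousLinearMap.le_opNorm _ _
      _ ≤ (α / β) / (1 + α / β) * ‖x - xstar‖ :=
          mul_le_mul_of_nonneg_right (hstab x hx) (norm_nonneg _)
  have h2 : ‖B x (g' x (x - xstar) - g x)‖ ≤ MI * (ωL / 2 * ‖x - xstar‖ ^ 2) := by
    calc ‖B x (g' x (x - xstar) - g x)‖ ≤ ‖B x‖ * ‖g' x (x - xstar) - g x‖ :=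
          ContinuousLinearMap.le_opNorm _ _
      _ ≤ MI * (ωL / 2 * ‖x - xstar‖ ^ 2) := by
          apply mul_le_mul (hBbound x hx) _ (norm_nonneg _) (le_of_lt hMI)
          rw [norm_sub_rev]
          exact hT
  have hc : (α / β) / (1 + α / β) = 1 / (1 + β / α) := by
    have hβα : 0 < 1 + β / α := by positivity
    have hαβ : 0 < 1 + α / β := by positivity
    rw [div_eq_div_iff hαβ.ne' hβα.ne', one_mul]
    field_simp
    ring
  rw [hrw]
  calc ‖B x ((α • R) (x - xstar)) + B x (g' x (x - xstar) - g x)‖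
      ≤ ‖B x ((α • R) (x - xstar))‖ + ‖B x (g' x (x - xstar) - g x)‖ := norm_add_le _ _
    _ ≤ 1 / (1 + β / α) * ‖x - xstar‖ + MI * (ωL / 2 * ‖x - xstar‖ ^ 2) :=
        add_le_add (hc ▸ h1) h2
    _ = ‖x - xstar‖ * (MI * (ωL / 2) * ‖x - xstar‖ + 1 / (1 + β / α)) := by ring
end

section
/- Under the residual convergence assumptions — g' Lipschitz with constant ω_L on a convex neighborhood containing x and x⁺ = x − (αR + g'(x))⁻¹ g(x), with ‖(αR + g'(x))⁻¹‖ ≤ M_I and ‖(αR)(αR + g'(x))⁻¹‖ ≤ (α/β_S)/(1 + α/β_S) — the residual satisfies ‖g(x⁺)‖ ≤ ‖g(x)‖ ( 1/(1 + β_S/α) + (ω_L M_I/2) ‖Δx‖ ), where Δx = x⁺ − x. -/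
/-- Residual bound: ‖g(x⁺)‖ ≤ ‖g(x)‖ ( 1/(1 + β_S/α) + (ω_L M_I/2)‖Δx‖ ). -/
theorem stmt_11 {d : ℕ}
    (g : EuclideanSpace ℝ (Fin d) → EuclideanSpace ℝ (Fin d))
    (g' : EuclideanSpace ℝ (Fin d) →
      (EuclideanSpace ℝ (Fin d) →L[ℝ] EuclideanSpace ℝ (Fin d)))
    (R : EuclideanSpace ℝ (Fin d) →L[ℝ] EuclideanSpace ℝ (Fin d))
    (B : EuclideanSpace ℝ (Fin d) →L[ℝ] EuclideanSpace ℝ (Fin d))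
    (α βS MI ωL : ℝ) (hα : 0 < α) (hβS : 0 < βS) (hMI : 0 < MI) (hωL : 0 < ωL)
    (hdiff : ∀ y, HasFDerivAt g (g' y) y) (hcont : Continuous g')
    (hRpsd : ∀ v : EuclideanSpace ℝ (Fin d), (0 : ℝ) ≤ inner ℝ v (R v))
    (x Δx : EuclideanSpace ℝ (Fin d))
    (s : Set (EuclideanSpace ℝ (Fin d))) (hsOpen : IsOpen s) (hsConv : Convex ℝ s)
    (hseg : segment ℝ x (x + Δx) ⊆ s)
    (hLip : ∀ y ∈ s, ∀ z ∈ s, ‖g' y - g' z‖ ≤ ωL * ‖y - z‖)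
    (hBl : B.comp (α • R + g' x) = ContinuousLinearMap.id ℝ _)
    (hBr : (α • R + g' x).comp B = ContinuousLinearMap.id ℝ _)
    (hBbound : ‖B‖ ≤ MI)
    (hstab : ‖(α • R).comp B‖ ≤ (α / βS) / (1 + α / βS))
    (hΔx : Δx = -(B (g x))) :
    ‖g (x + Δx)‖ ≤ ‖g x‖ * (1 / (1 + βS / α) + (ωL * MI / 2) * ‖Δx‖) := by
  set c := ‖Δx‖ with hc
  -- derivative of t ↦ g (x + t • Δx)
  have hmem : ∀ t ∈ Set.Icc (0:ℝ) 1, x + t • Δx ∈ s := by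
    intro t ht
    apply hseg
    rw [segment_eq_image']
    exact ⟨t, ht, by simp⟩
  have hderiv : ∀ t : ℝ, HasDerivAt (fun t : ℝ => g (x + t • Δx))
      (g' (x + t • Δx) Δx) t := by
    intro t
    have h1 : HasDerivAt (fun t : ℝ => x + t • Δx) Δx t := by
      simpa using ((hasDerivAt_id t).smul_const Δx).const_add x
    exact (hdiff (x + t • Δx)).comp_hasDerivAt t h1
  have hcont' : Continuous fun t : ℝ => g' (x + t • Δx) Δx := by
    have : Continuous fun t : ℝ => x + t • Δx :=
      continuous_const.add (continuous_id.smul continuous_const)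
    exact ((hcont.comp this).clm_apply continuous_const)
  have hint : IntervalIntegrable (fun t : ℝ => g' (x + t • Δx) Δx)
      MeasureTheory.volume 0 1 := hcont'.intervalIntegrable 0 1
  have heq : ∫ t in (0:ℝ)..1, g' (x + t • Δx) Δx = g (x + Δx) - g x := by
    have := intervalIntegral.integral_eq_sub_of_hasDerivAt
      (fun t _ => hderiv t) hint
    simpa using this
  -- the remainder integral
  have hconst : ∫ t in (0:ℝ)..1, (g' x) Δx = (g' x) Δx := by simp
  have hrem : g (x + Δx) - g x - g' x Δx
      = ∫ t in (0:ℝ)..1, (g' (x + t • Δx) Δx - g' x Δx) := by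
    rw [intervalIntegral.integral_sub hint
      ((continuous_const : Continuous fun _ : ℝ => (g' x) Δx).intervalIntegrable 0 1),
      heq, hconst]
  have hrembound : ‖g (x + Δx) - g x - g' x Δx‖ ≤ ωL / 2 * c ^ 2 := by
    rw [hrem]
    have hb : ∀ t ∈ Set.Icc (0:ℝ) 1,
        ‖g' (x + t • Δx) Δx - g' x Δx‖ ≤ (ωL * c ^ 2) * t := by
      intro t ht
      have h1 : ‖g' (x + t • Δx) - g' x‖ ≤ ωL * (t * c) := by
        have hL := hLip _ (hmem t ht) _ (hmem 0 (by norm_num))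
        simp only [zero_smul, add_zero, add_sub_cancel_left] at hL
        rwa [norm_smul, Real.norm_eq_abs, abs_of_nonneg ht.1] at hL
      calc ‖g' (x + t • Δx) Δx - g' x Δx‖
          = ‖(g' (x + t • Δx) - g' x) Δx‖ := by simp
        _ ≤ ‖g' (x + t • Δx) - g' x‖ * c := (g' (x + t • Δx) - g' x).le_opNorm Δx
        _ ≤ ωL * (t * c) * c := by
            apply mul_le_mul_of_nonneg_right h1 (norm_nonneg _)
        _ = (ωL * c ^ 2) * t := by ring
    calc ‖∫ t in (0:ℝ)..1, (g' (x + t • Δx) Δx - g' x Δx)‖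
        ≤ ∫ t in (0:ℝ)..1, ‖g' (x + t • Δx) Δx - g' x Δx‖ :=
          intervalIntegral.norm_integral_le_integral_norm (by norm_num)
      _ ≤ ∫ t in (0:ℝ)..1, (ωL * c ^ 2) * t := by
          apply intervalIntegral.integral_mono_on (by norm_num)
          · exact (hcont'.sub continuous_const).norm.intervalIntegrable 0 1
          · exact (continuous_const.mul continuous_id).intervalIntegrable 0 1
          · exact hb
      _ = ωL / 2 * c ^ 2 := by
          rw [intervalIntegral.integral_const_mul]
          simp [integral_id]
          ring
  -- linear part: g x + g' x Δx = (α•R) (B (g x))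
  have hlin : g x + g' x Δx = ((α • R).comp B) (g x) := by
    have h1 : (α • R + g' x) (B (g x)) = g x := by
      have := congrArg (fun T => T (g x)) hBr
      simpa using this
    rw [hΔx]
    simp only [map_neg, ContinuousLinearMap.coe_comp', Function.comp_apply]
    have h2 : (α • R) (B (g x)) + g' x (B (g x)) = g x := by
      simpa [ContinuousLinearMap.add_apply] using h1
    have h3 : (α • R) (B (g x)) = g x - g' x (B (g x)) := eq_sub_of_add_eq h2
    rw [h3]
    abel
  have hlinbound : ‖g x + g' x Δx‖ ≤ 1 / (1 + βS / α) * ‖g x‖ := by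
    rw [hlin]
    calc ‖((α • R).comp B) (g x)‖ ≤ ‖(α • R).comp B‖ * ‖g x‖ :=
          ((α • R).comp B).le_opNorm _
      _ ≤ (α / βS) / (1 + α / βS) * ‖g x‖ :=
          mul_le_mul_of_nonneg_right hstab (norm_nonneg _)
      _ = 1 / (1 + βS / α) * ‖g x‖ := by
          have hratio : α / βS / (1 + α / βS) = 1 / (1 + βS / α) := by
            have h1 : 1 + α / βS = (βS + α) / βS := by field_simp
            have h2 : 1 + βS / α = (α + βS) / α := by field_simp
            rw [h1, h2, one_div_div, div_div, mul_div_cancel₀ _ hβS.ne', add_comm]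
          rw [hratio]
  have hcb : c ≤ MI * ‖g x‖ := by
    rw [hc, hΔx, norm_neg]
    calc ‖B (g x)‖ ≤ ‖B‖ * ‖g x‖ := B.le_opNorm _
      _ ≤ MI * ‖g x‖ := mul_le_mul_of_nonneg_right hBbound (norm_nonneg _)
  calc ‖g (x + Δx)‖ = ‖(g x + g' x Δx) + (g (x + Δx) - g x - g' x Δx)‖ := by
        congr 1; abel
    _ ≤ ‖g x + g' x Δx‖ + ‖g (x + Δx) - g x - g' x Δx‖ := norm_add_le _ _
    _ ≤ 1 / (1 + βS / α) * ‖g x‖ + ωL / 2 * c ^ 2 := add_le_add hlinbound hrembound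
    _ ≤ 1 / (1 + βS / α) * ‖g x‖ + ωL / 2 * ((MI * ‖g x‖) * c) := by
        have h4 : ωL / 2 * c ^ 2 ≤ ωL / 2 * ((MI * ‖g x‖) * c) := by
          apply mul_le_mul_of_nonneg_left _ (by positivity)
          rw [pow_two]
          exact mul_le_mul_of_nonneg_right hcb (norm_nonneg _)
        linarith
    _ = ‖g x‖ * (1 / (1 + βS / α) + (ωL * MI / 2) * c) := by ring
end

section
/- Under the residual convergence assumptions, ‖g(x⁺)‖ ≤ C_B ‖g(x)‖ ( ‖g(x)‖ + (α/β_S)(1/C_B) ) where C_B = ω_L M_I²/2 and x⁺ = x − (αR + g'(x))⁻¹ g(x). -/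
/-- Residual bound: ‖g(x⁺)‖ ≤ C_B ‖g(x)‖ ( ‖g(x)‖ + (α/β_S)(1/C_B) ), C_B = ω_L M_I²/2. -/
theorem stmt_12 {d : ℕ}
    (g : EuclideanSpace ℝ (Fin d) → EuclideanSpace ℝ (Fin d))
    (g' : EuclideanSpace ℝ (Fin d) →
      (EuclideanSpace ℝ (Fin d) →L[ℝ] EuclideanSpace ℝ (Fin d)))
    (R : EuclideanSpace ℝ (Fin d) →L[ℝ] EuclideanSpace ℝ (Fin d))
    (B : EuclideanSpace ℝ (Fin d) →L[ℝ] EuclideanSpace ℝ (Fin d))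
    (α βS MI ωL : ℝ) (hα : 0 < α) (hβS : 0 < βS) (hMI : 0 < MI) (hωL : 0 < ωL)
    (hdiff : ∀ y, HasFDerivAt g (g' y) y) (hcont : Continuous g')
    (hRpsd : ∀ v : EuclideanSpace ℝ (Fin d), (0 : ℝ) ≤ inner ℝ v (R v))
    (x Δx : EuclideanSpace ℝ (Fin d))
    (s : Set (EuclideanSpace ℝ (Fin d))) (hsOpen : IsOpen s) (hsConv : Convex ℝ s)
    (hseg : segment ℝ x (x + Δx) ⊆ s)
    (hLip : ∀ y ∈ s, ∀ z ∈ s, ‖g' y - g' z‖ ≤ ωL * ‖y - z‖)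
    (hBl : B.comp (α • R + g' x) = ContinuousLinearMap.id ℝ _)
    (hBr : (α • R + g' x).comp B = ContinuousLinearMap.id ℝ _)
    (hBbound : ‖B‖ ≤ MI)
    (hstab : ‖(α • R).comp B‖ ≤ (α / βS) / (1 + α / βS))
    (hΔx : Δx = -(B (g x))) :
    ‖g (x + Δx)‖ ≤ (ωL * MI ^ 2 / 2) * ‖g x‖ * (‖g x‖ + (α / βS) * (1 / (ωL * MI ^ 2 / 2))) := by
  -- membership of segment points in s
  have hmem : ∀ t : ℝ, t ∈ Set.Icc (0:ℝ) 1 → x + t • Δx ∈ s := by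
    intro t ht
    apply hseg
    refine ⟨1 - t, t, by linarith [ht.2], ht.1, by linarith [ht.1], ?_⟩
    rw [smul_add]
    module
  -- derivative of the path t ↦ g (x + t • Δx)
  have hpath : ∀ t : ℝ, HasDerivAt (fun t : ℝ => g (x + t • Δx) - t • (g' x Δx))
      ((g' (x + t • Δx)) Δx - g' x Δx) t := by
    intro t
    have h1 : HasDerivAt (fun t : ℝ => x + t • Δx) Δx t := by
      simpa using ((hasDerivAt_id t).smul_const Δx).const_add x
    have h2 := (hdiff (x + t • Δx)).comp_hasDerivAt t h1
    have h3 : HasDerivAt (fun t : ℝ => t • (g' x Δx)) (g' x Δx) t := by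
      simpa using (hasDerivAt_id t).smul_const (g' x Δx)
    exact h2.sub h3
  have hcontI : Continuous fun t : ℝ => (g' (x + t • Δx)) Δx - g' x Δx := by
    have : Continuous fun t : ℝ => g' (x + t • Δx) :=
      hcont.comp (continuous_const.add (continuous_id.smul continuous_const))
    exact (this.clm_apply continuous_const).sub continuous_const
  have hInt : IntervalIntegrable (fun t : ℝ => (g' (x + t • Δx)) Δx - g' x Δx)
      MeasureTheory.volume 0 1 := hcontI.intervalIntegrable 0 1
  have htaylor : g (x + Δx) - g x - g' x Δx =
      ∫ t in (0:ℝ)..1, ((g' (x + t • Δx)) Δx - g' x Δx) := by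
    rw [intervalIntegral.integral_eq_sub_of_hasDerivAt (fun t _ => hpath t) hInt]
    simp only [one_smul, zero_smul, smul_zero, sub_zero, zero_smul]
    simp only [zero_smul, add_zero, sub_zero]
    abel
  -- bound on the remainder
  have hrem : ‖g (x + Δx) - g x - g' x Δx‖ ≤ ωL / 2 * ‖Δx‖ ^ 2 := by
    rw [htaylor]
    have hb : ∀ t ∈ Set.Icc (0:ℝ) 1,
        ‖(g' (x + t • Δx)) Δx - g' x Δx‖ ≤ ωL * t * ‖Δx‖ ^ 2 := by
      intro t ht
      have hx0 : x ∈ s := by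
        have h0 := hmem 0 (by norm_num)
        rwa [zero_smul, add_zero] at h0
      have h1 : ‖g' (x + t • Δx) - g' x‖ ≤ ωL * ‖t • Δx‖ := by
        have h := hLip _ (hmem t ht) x hx0
        rwa [add_sub_cancel_left] at h
      calc ‖(g' (x + t • Δx)) Δx - g' x Δx‖
          = ‖(g' (x + t • Δx) - g' x) Δx‖ := by simp
        _ ≤ ‖g' (x + t • Δx) - g' x‖ * ‖Δx‖ := (g' (x + t • Δx) - g' x).le_opNorm Δx
        _ ≤ (ωL * ‖t • Δx‖) * ‖Δx‖ := by
            apply mul_le_mul_of_nonneg_right h1 (norm_nonneg _)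
        _ = ωL * t * ‖Δx‖ ^ 2 := by
            rw [norm_smul, Real.norm_eq_abs, abs_of_nonneg ht.1]; ring
    have := intervalIntegral.norm_integral_le_abs_of_norm_le (μ := MeasureTheory.volume)
        (f := fun t : ℝ => (g' (x + t • Δx)) Δx - g' x Δx)
        (g := fun t : ℝ => ωL * t * ‖Δx‖ ^ 2) (a := 0) (b := 1)
        (by
          filter_upwards [MeasureTheory.ae_restrict_mem measurableSet_uIoc] with t ht
          have ht' : t ∈ Set.Icc (0:ℝ) 1 := by
            rw [Set.uIoc_of_le (by norm_num : (0:ℝ) ≤ 1)] at ht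
            exact ⟨le_of_lt ht.1, ht.2⟩
          exact hb t ht')
        (Continuous.intervalIntegrable ((continuous_const.mul continuous_id).mul continuous_const) 0 1)
    have heq : (∫ t in (0:ℝ)..1, ωL * t * ‖Δx‖ ^ 2) = ωL / 2 * ‖Δx‖ ^ 2 := by
      rw [intervalIntegral.integral_mul_const, intervalIntegral.integral_const_mul,
        integral_id]
      ring
    rw [heq, abs_of_nonneg (by positivity)] at this
    exact this
  -- linear part: g x + g' x Δx = (α • R) (B (g x))
  have hlin : g x + g' x Δx = ((α • R).comp B) (g x) := by
    have h := congrArg (fun T : EuclideanSpace ℝ (Fin d) →L[ℝ] EuclideanSpace ℝ (Fin d) => T (g x)) hBr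
    simp only [ContinuousLinearMap.comp_apply, ContinuousLinearMap.add_apply,
      ContinuousLinearMap.id_apply] at h
    have h2 : (α • R) (B (g x)) = g x - g' x (B (g x)) := eq_sub_of_add_eq h
    rw [hΔx, ContinuousLinearMap.comp_apply, h2, map_neg]
    abel
  have hΔxb : ‖Δx‖ ≤ MI * ‖g x‖ := by
    rw [hΔx, norm_neg]
    calc ‖B (g x)‖ ≤ ‖B‖ * ‖g x‖ := B.le_opNorm _
      _ ≤ MI * ‖g x‖ := mul_le_mul_of_nonneg_right hBbound (norm_nonneg _)
  have hlinb : ‖g x + g' x Δx‖ ≤ (α / βS) * ‖g x‖ := by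
    rw [hlin]
    calc ‖((α • R).comp B) (g x)‖ ≤ ‖(α • R).comp B‖ * ‖g x‖ := ContinuousLinearMap.le_opNorm _ _
      _ ≤ ((α / βS) / (1 + α / βS)) * ‖g x‖ :=
          mul_le_mul_of_nonneg_right hstab (norm_nonneg _)
      _ ≤ (α / βS) * ‖g x‖ := by
          apply mul_le_mul_of_nonneg_right _ (norm_nonneg _)
          have h1 : (0:ℝ) < α / βS := by positivity
          rw [div_le_iff₀ (by linarith)]
          nlinarith
  have hfinal : ‖g (x + Δx)‖ ≤ ωL / 2 * (MI * ‖g x‖) ^ 2 + (α / βS) * ‖g x‖ := by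
    have h1 : ‖g (x + Δx)‖ ≤ ‖g (x + Δx) - g x - g' x Δx‖ + ‖g x + g' x Δx‖ := by
      have := norm_add_le (g (x + Δx) - g x - g' x Δx) (g x + g' x Δx)
      simpa using this
    have h2 : ωL / 2 * ‖Δx‖ ^ 2 ≤ ωL / 2 * (MI * ‖g x‖) ^ 2 := by
      apply mul_le_mul_of_nonneg_left _ (by positivity)
      exact pow_le_pow_left₀ (norm_nonneg _) hΔxb 2
    linarith [hrem, hlinb]
  have hC : (0:ℝ) < ωL * MI ^ 2 / 2 := by positivity
  calc ‖g (x + Δx)‖ ≤ ωL / 2 * (MI * ‖g x‖) ^ 2 + (α / βS) * ‖g x‖ := hfinal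
    _ = (ωL * MI ^ 2 / 2) * ‖g x‖ * (‖g x‖ + (α / βS) * (1 / (ωL * MI ^ 2 / 2))) := by
        field_simp
end
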